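/- In the linear contract setting, the utility function is one-sided Lipschitz to the right: for any α ≥ 0 and ε ≥ 0 with α + ε ≤ 1, u(α) − u(α+ε) ≤ ε. -/
import Mathlib


/-- In the linear contract setting, the utility function is one-sided
Lipschitz to the right: for α ≥ 0, ε ≥ 0 with α + ε ≤ 1, u(α) − u(α+ε) ≤ ε. -/
theorem linear_contract_one_sided_lipschitz
    {A : Type*} [Nonempty A]
    (V c : A → ℝ) (astar : ℝ → A)
    (hV : ∀ a, V a ∈ Set.Icc (0:ℝ) 1) (hc : ∀ a, 0 ≤ c a)
    (hbr : ∀ (α : ℝ) (a : A), α * V a - c a ≤ α * V (astar α) - c (astar α))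
    (u : ℝ → ℝ) (hu : ∀ α, u α = (1 - α) * V (astar α))
    (α ε : ℝ) (h0 : 0 ≤ α) (hε : 0 ≤ ε) (h1 : α + ε ≤ 1) :
    u α - u (α + ε) ≤ ε := by
  rcases eq_or_lt_of_le hε with h | h
  · have : α + ε = α := by rw [← h]; ring
    rw [this]; linarith
  · have h1' := hbr (α + ε) (astar α)
    have h2' := hbr α (astar (α + ε))
    have hb1 := hV (astar α)
    have hb2 := hV (astar (α + ε))
    simp only [Set.mem_Icc] at hb1 hb2
    -- ε * (V (astar (α+ε)) - V (astar α)) ≥ 0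
    have hmono : V (astar α) ≤ V (astar (α + ε)) := by
      have : ε * V (astar α) ≤ ε * V (astar (α + ε)) := by nlinarith
      exact le_of_mul_le_mul_left this h
    rw [hu, hu]
    nlinarith [mul_nonneg (by linarith : (0:ℝ) ≤ 1 - (α + ε)) (sub_nonneg.2 hmono)]
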